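/- For every positive integer k and every real x > 0, P_{2k}(x)/Q_{2k}(x) < F(x) < P_{2k-1}(x)/Q_{2k-1}(x). -/

import Mathlib

noncomputable def F (x : ℝ) : ℝ := ∫ t in Set.Ioi (0:ℝ), Real.exp (-t) / (t + x)
noncomputable def c (n : ℕ) (x : ℝ) : ℝ := if n % 2 = 1 then x else 2 / n

/-- `P n` is the paper's `P_{n-1}` (so `P 0 = P_{-1} = 1`, `P 1 = P_0 = 0`). -/
noncomputable def P : ℕ → ℝ → ℝ
  | 0 => fun _ => 1
  | 1 => fun _ => 0
  | (n + 2) => fun x => c (n + 1) x * P (n + 1) x + P n x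

/-- `Q n` is the paper's `Q_{n-1}` (so `Q 0 = Q_{-1} = 0`, `Q 1 = Q_0 = 1`). -/
noncomputable def Q : ℕ → ℝ → ℝ
  | 0 => fun _ => 0
  | 1 => fun _ => 1
  | (n + 2) => fun x => c (n + 1) x * Q (n + 1) x + Q n x

open MeasureTheory Set Real Filter

noncomputable def J (a b : ℕ) (x : ℝ) : ℝ :=
  ∫ t in Set.Ioi (0:ℝ), t ^ a * Real.exp (-t) / (t + x) ^ b

lemma intA (a : ℕ) : IntegrableOn (fun t : ℝ => t ^ a * Real.exp (-t)) (Set.Ioi 0) := by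
  have h := Real.GammaIntegral_convergent (s := a + 1) (by positivity)
  refine h.congr_fun (fun t ht => ?_) measurableSet_Ioi
  have ht' : (0:ℝ) < t := ht
  simp only [add_sub_cancel_right, Real.rpow_natCast]
  ring

lemma intJ (a b : ℕ) {x : ℝ} (hx : 0 < x) :
    IntegrableOn (fun t : ℝ => t ^ a * Real.exp (-t) / (t + x) ^ b) (Set.Ioi 0) := by
  have hmeas : AEStronglyMeasurable (fun t : ℝ => t ^ a * Real.exp (-t) / (t + x) ^ b)
      (volume.restrict (Set.Ioi (0:ℝ))) := by
    apply ContinuousOn.aestronglyMeasurable ?_ measurableSet_Ioi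
    apply ContinuousOn.div (by fun_prop) (by fun_prop)
    intro t ht
    have : (0:ℝ) < t := ht
    positivity
  refine Integrable.mono' (((intA a).const_mul ((x ^ b)⁻¹))) hmeas ?_
  rw [ae_restrict_iff' measurableSet_Ioi]
  filter_upwards with t ht
  have ht' : (0:ℝ) < t := ht
  have h1 : (0:ℝ) < t + x := by linarith
  have h2 : x ^ b ≤ (t + x) ^ b := pow_le_pow_left₀ hx.le (by linarith) b
  rw [Real.norm_eq_abs, abs_of_nonneg (by positivity)]
  rw [div_le_iff₀ (by positivity)]
  calc t ^ a * Real.exp (-t) = (x^b)⁻¹ * (t ^ a * Real.exp (-t)) * x ^ b := by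
        field_simp
    _ ≤ (x^b)⁻¹ * (t ^ a * Real.exp (-t)) * (t+x) ^ b := by
        have : (0:ℝ) ≤ (x^b)⁻¹ * (t ^ a * Real.exp (-t)) := by positivity
        exact mul_le_mul_of_nonneg_left h2 this

lemma J_pos (a b : ℕ) {x : ℝ} (hx : 0 < x) : 0 < J a b x := by
  rw [J, setIntegral_pos_iff_support_of_nonneg_ae]
  · have hsub : Set.Ioi (0:ℝ) ⊆ Function.support
        (fun t : ℝ => t ^ a * Real.exp (-t) / (t + x) ^ b) ∩ Set.Ioi 0 := by
      intro t ht
      have ht' : (0:ℝ) < t := ht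
      have h1 : (0:ℝ) < t + x := by linarith
      refine ⟨?_, ht⟩
      have : (0:ℝ) < t ^ a * Real.exp (-t) / (t + x) ^ b := by positivity
      exact ne_of_gt this
    calc (0:ENNReal) < volume (Set.Ioi (0:ℝ)) := by simp
      _ ≤ _ := measure_mono hsub
  · rw [EventuallyLE, ae_restrict_iff' measurableSet_Ioi]
    filter_upwards with t ht
    have ht' : (0:ℝ) < t := ht
    have h1 : (0:ℝ) < t + x := by linarith
    positivity
  · exact intJ a b hx

lemma J_zero_zero {x : ℝ} : J 0 0 x = 1 := by
  rw [J]
  simp only [pow_zero, one_mul, div_one]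
  exact integral_exp_neg_Ioi_zero

lemma F_eq_J {x : ℝ} : F x = J 0 1 x := by
  rw [F, J]
  congr 1
  ext t
  simp

-- identity A
lemma idA (k : ℕ) {x : ℝ} (hx : 0 < x) :
    x * J k (k+1) x - J k k x = -(J (k+1) (k+1) x) := by
  rw [J, J, J, ← integral_const_mul, ← integral_sub ((intJ k (k+1) hx).const_mul x) (intJ k k hx),
    ← integral_neg]
  refine setIntegral_congr_fun measurableSet_Ioi (fun t ht => ?_)
  have ht' : (0:ℝ) < t := ht
  have h1 : (0:ℝ) < t + x := by linarith
  have h2 : (t + x) ^ (k+1) ≠ 0 := by positivity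
  have h3 : (t + x) ^ k ≠ 0 := by positivity
  field_simp
  ring

-- identity B (integration by parts)
lemma idB (k : ℕ) {x : ℝ} (hx : 0 < x) :
    J k (k+1) x - ((k:ℝ)+1)⁻¹ * J (k+1) (k+1) x = J (k+1) (k+2) x := by
  set f : ℝ → ℝ := fun t => t ^ (k+1) * Real.exp (-t) / (((k:ℝ)+1) * (t + x) ^ (k+1)) with hf
  set f' : ℝ → ℝ := fun t => (t ^ k * Real.exp (-t) / (t+x)^(k+1)
      - ((k:ℝ)+1)⁻¹ * (t ^ (k+1) * Real.exp (-t) / (t+x)^(k+1)))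
      - t ^ (k+1) * Real.exp (-t) / (t+x)^(k+2) with hf'
  have hk1 : ((k:ℝ)+1) ≠ 0 := by positivity
  have hint : IntegrableOn f' (Set.Ioi 0) :=
    ((intJ k (k+1) hx).sub ((intJ (k+1) (k+1) hx).const_mul _)).sub (intJ (k+1) (k+2) hx)
  have hderiv : ∀ t ∈ Set.Ici (0:ℝ), HasDerivAt f (f' t) t := by
    intro t ht
    have ht' : (0:ℝ) ≤ t := ht
    have h1 : (0:ℝ) < t + x := by linarith
    have hd1 : HasDerivAt (fun t : ℝ => t ^ (k+1) * Real.exp (-t))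
        (((k:ℝ)+1) * t ^ k * Real.exp (-t) + t ^ (k+1) * (-Real.exp (-t))) t := by
      have e1 : HasDerivAt (fun t : ℝ => t ^ (k+1)) (((k:ℝ)+1) * t ^ k) t := by
        simpa using hasDerivAt_pow (k+1) t
      have e2 : HasDerivAt (fun t : ℝ => Real.exp (-t)) (-Real.exp (-t)) t := by
        simpa [Function.comp_def] using (Real.hasDerivAt_exp (-t)).comp t (hasDerivAt_neg t)
      exact e1.mul e2
    have hd2 : HasDerivAt (fun t : ℝ => ((k:ℝ)+1) * (t + x) ^ (k+1))
        (((k:ℝ)+1) * (((k:ℝ)+1) * (t + x) ^ k)) t := by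
      have e3 : HasDerivAt (fun t : ℝ => (t + x) ^ (k+1)) (((k:ℝ)+1) * (t + x) ^ k) t := by
        have := (hasDerivAt_pow (k+1) (t+x)).comp t ((hasDerivAt_id t).add_const x)
        simpa [Function.comp_def] using this
      exact e3.const_mul _
    have hden : ((k:ℝ)+1) * (t + x) ^ (k+1) ≠ 0 := by positivity
    have := hd1.div hd2 hden
    refine this.congr_deriv ?_
    rw [hf']
    have h2 : (t + x) ^ (k+1) ≠ 0 := by positivity
    have h3 : (t + x) ^ (k+2) ≠ 0 := by positivity
    field_simp
    ring
  have htends : Tendsto f atTop (nhds 0) := by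
    have t1 : Tendsto (fun t : ℝ => t ^ (k+1) * Real.exp (-t)) atTop (nhds 0) := by
      simpa using tendsto_pow_mul_exp_neg_atTop_nhds_zero (k+1)
    have t2 : Tendsto (fun t : ℝ => (((k:ℝ)+1) * (t + x) ^ (k+1))⁻¹) atTop (nhds 0) := by
      apply Tendsto.inv_tendsto_atTop
      apply Tendsto.const_mul_atTop (by positivity)
      exact (tendsto_pow_atTop (Nat.succ_ne_zero k)).comp (tendsto_atTop_add_const_right _ x tendsto_id)
    have := t1.mul t2
    simpa [hf, div_eq_mul_inv] using this
  have key := integral_Ioi_of_hasDerivAt_of_tendsto' hderiv hint htends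
  have hf0 : f 0 = 0 := by simp [hf]
  rw [hf0, sub_zero] at key
  have expand : ∫ t in Set.Ioi (0:ℝ), f' t
      = J k (k+1) x - ((k:ℝ)+1)⁻¹ * J (k+1) (k+1) x - J (k+1) (k+2) x := by
    rw [hf', J, J, J]
    have hA : IntegrableOn (fun t : ℝ => t ^ k * Real.exp (-t) / (t+x)^(k+1)
        - ((k:ℝ)+1)⁻¹ * (t ^ (k+1) * Real.exp (-t) / (t+x)^(k+1))) (Set.Ioi 0) :=
      (intJ k (k+1) hx).sub ((intJ (k+1) (k+1) hx).const_mul (((k:ℝ)+1)⁻¹))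
    have hB : IntegrableOn (fun t : ℝ => ((k:ℝ)+1)⁻¹ * (t ^ (k+1) * Real.exp (-t) / (t+x)^(k+1)))
        (Set.Ioi 0) := (intJ (k+1) (k+1) hx).const_mul (((k:ℝ)+1)⁻¹)
    rw [integral_sub hA (intJ (k+1) (k+2) hx),
      integral_sub (intJ k (k+1) hx) hB, integral_const_mul]
  rw [key] at expand
  linarith

lemma c_pos (n : ℕ) {x : ℝ} (hx : 0 < x) : 0 < c (n+1) x := by
  rw [c]
  split
  · exact hx
  · have : (0:ℝ) < ((n:ℝ)+1) := by positivity
    push_cast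
    positivity

lemma Q_pos {x : ℝ} (hx : 0 < x) : ∀ n : ℕ, 0 ≤ Q n x ∧ (n ≠ 0 → 0 < Q n x)
  | 0 => by simp [Q]
  | 1 => by simp [Q]
  | (n+2) => by
    obtain ⟨h0, _⟩ := Q_pos hx n
    obtain ⟨_, h1⟩ := Q_pos hx (n+1)
    have hc := c_pos n hx
    have hq1 : 0 < Q (n+1) x := h1 (Nat.succ_ne_zero n)
    have : 0 < c (n+1) x * Q (n+1) x + Q n x := by nlinarith
    exact ⟨by simpa [Q] using this.le, fun _ => by simpa [Q] using this⟩

noncomputable def E (n : ℕ) (x : ℝ) : ℝ := Q n x * F x - P n x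

lemma E_rec (n : ℕ) (x : ℝ) : E (n+2) x = c (n+1) x * E (n+1) x + E n x := by
  simp only [E, P, Q]
  ring

lemma E_formula {x : ℝ} (hx : 0 < x) :
    ∀ k : ℕ, E (2*k) x = -(J k k x) ∧ E (2*k+1) x = J k (k+1) x := by
  intro k
  induction k with
  | zero =>
    constructor
    · simp [E, Q, P, J_zero_zero]
    · simp only [E, mul_zero, zero_add]
      show Q 1 x * F x - P 1 x = J 0 1 x
      simp [Q, P, F_eq_J]
  | succ k ih =>
    obtain ⟨h0, h1⟩ := ih
    have hcodd : c (2*k+1) x = x := by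
      have hm : (2*k+1) % 2 = 1 := by omega
      simp [c, hm]
    have hceven : c (2*k+2) x = ((k:ℝ)+1)⁻¹ := by
      have hm : (2*k+2) % 2 = 0 := by omega
      have hcast : ((2*k+2 : ℕ) : ℝ) = 2*((k:ℝ)+1) := by push_cast; ring
      rw [c, if_neg (by omega), hcast]
      rw [div_eq_iff (by positivity)]
      field_simp
    have e22 : E (2*k+2) x = -(J (k+1) (k+1) x) := by
      have hr : E (2*k+2) x = c (2*k+1) x * E (2*k+1) x + E (2*k) x := E_rec (2*k) x
      rw [hcodd, h1, h0] at hr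
      rw [hr]
      linarith [idA k hx]
    have e23 : E (2*k+3) x = J (k+1) (k+2) x := by
      have hr : E (2*k+3) x = c (2*k+2) x * E (2*k+2) x + E (2*k+1) x := E_rec (2*k+1) x
      rw [hceven, e22, h1] at hr
      rw [hr]
      linarith [idB k hx]
    refine ⟨?_, ?_⟩
    · rw [show 2*(k+1) = 2*k+2 from by ring]; exact e22
    · rw [show 2*(k+1)+1 = 2*k+3 from by omega, show k+1+1 = k+2 from rfl]; exact e23

/-- `P (n+1)`, `Q (n+1)` are the paper's `P_n`, `Q_n`. -/
theorem stmt_10 (k : ℕ) (hk : 1 ≤ k) (x : ℝ) (hx : 0 < x) :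
    P (2 * k + 1) x / Q (2 * k + 1) x < F x ∧ F x < P (2 * k) x / Q (2 * k) x := by
  obtain ⟨hE0, hE1⟩ := E_formula hx k
  have hQ1 : 0 < Q (2*k+1) x := (Q_pos hx (2*k+1)).2 (by omega)
  have hQ0 : 0 < Q (2*k) x := (Q_pos hx (2*k)).2 (by omega)
  constructor
  · rw [div_lt_iff₀ hQ1]
    have hJ : 0 < J k (k+1) x := J_pos k (k+1) hx
    have : 0 < Q (2*k+1) x * F x - P (2*k+1) x := by rw [← E, hE1]; exact hJ
    nlinarith
  · rw [lt_div_iff₀ hQ0]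
    have hJ : 0 < J k k x := J_pos k k hx
    have : Q (2*k) x * F x - P (2*k) x < 0 := by rw [← E, hE0]; linarith
    nlinarith
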